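/- arXiv:1507.05932 — 2 statements merged into one kernel-verified Lean document; each statement's English description precedes it below -/
import Mathlib

section
/- For real numbers l > 0 and s > 0, the integral ∫₀^∞ e^{-t s²} (4πt)^{-1/2} e^{-l²/(4t)} dt equals e^{-l s} / (2 s). -/
open MeasureTheory Real

-- image of Ioi 0 under u ↦ u - c/u is univ
lemma img_univ (c : ℝ) (hc : 0 < c) :
    (fun u : ℝ => u - c / u) '' Set.Ioi 0 = Set.univ := by
  ext v
  simp only [Set.mem_image, Set.mem_univ, iff_true]
  set r := Real.sqrt (v ^ 2 + 4 * c) with hr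
  have hr2 : r ^ 2 = v ^ 2 + 4 * c := Real.sq_sqrt (by positivity)
  have hrv : |v| < r := by
    rw [← Real.sqrt_sq_eq_abs]
    apply Real.sqrt_lt_sqrt (by positivity)
    linarith
  have hu : 0 < (v + r) / 2 := by
    have := neg_abs_le v
    have := abs_lt.mp hrv
    linarith
  refine ⟨(v + r) / 2, hu, ?_⟩
  have h2 : ((v + r) / 2) ^ 2 = v * ((v + r) / 2) + c := by
    field_simp
    nlinarith [hr2]
  have h3 : c / ((v + r) / 2) = (v + r) / 2 - v := by
    rw [div_eq_iff (ne_of_gt hu)]; nlinarith [h2]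
  simp only [h3]; ring

lemma mono_f (c : ℝ) (hc : 0 < c) : StrictMonoOn (fun u : ℝ => u - c / u) (Set.Ioi 0) := by
  intro u hu w hw huw
  simp only [Set.mem_Ioi] at hu hw
  have : c / w < c / u := div_lt_div_of_pos_left hc hu huw
  simp only
  linarith

lemma g_integrable (a c : ℝ) (ha : 0 < a) (hc : 0 < c) :
    IntegrableOn (fun u : ℝ => Real.exp (-(a * (u - c / u) ^ 2))) (Set.Ioi 0) := by
  have hcont : ContinuousOn (fun u : ℝ => Real.exp (-(a * (u - c / u) ^ 2))) (Set.Ioi 0) := by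
    apply Real.continuous_exp.comp_continuousOn
    apply ContinuousOn.neg
    apply ContinuousOn.mul continuousOn_const
    apply ContinuousOn.pow
    exact continuousOn_id.sub (continuousOn_const.div continuousOn_id
      (fun x hx => ne_of_gt hx))
  refine Integrable.mono' (g := fun u => Real.exp (2 * a * c) * Real.exp (-a * u ^ 2))
    (((integrable_exp_neg_mul_sq ha).const_mul _).integrableOn)
    (hcont.aestronglyMeasurable measurableSet_Ioi) ?_
  filter_upwards [ae_restrict_mem measurableSet_Ioi] with u hu
  simp only [Set.mem_Ioi] at hu
  rw [Real.norm_eq_abs, abs_of_pos (Real.exp_pos _), ← Real.exp_add]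
  apply Real.exp_le_exp.mpr
  have h1 : a * (u - c / u) ^ 2 = a * u ^ 2 - 2 * a * c + a * c ^ 2 / u ^ 2 := by
    field_simp
    ring
  have h2 : 0 ≤ a * c ^ 2 / u ^ 2 := by positivity
  nlinarith

lemma key (a c : ℝ) (ha : 0 < a) (hc : 0 < c) :
    ∫ u in Set.Ioi (0:ℝ), Real.exp (-(a * u ^ 2 + a * c ^ 2 / u ^ 2))
      = Real.sqrt (π / a) / 2 * Real.exp (-(2 * a * c)) := by
  set g : ℝ → ℝ := fun u => Real.exp (-(a * (u - c / u) ^ 2)) with hg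
  -- rewrite integrand
  have hsplit : ∀ u ∈ Set.Ioi (0:ℝ),
      Real.exp (-(a * u ^ 2 + a * c ^ 2 / u ^ 2)) = Real.exp (-(2 * a * c)) * g u := by
    intro u hu
    simp only [Set.mem_Ioi] at hu
    rw [hg, ← Real.exp_add]
    congr 1
    field_simp
    ring
  rw [setIntegral_congr_fun measurableSet_Ioi hsplit, integral_const_mul]
  -- symmetry: ∫ (c/u^2) * g u = ∫ g
  have hinv_deriv : ∀ u ∈ Set.Ioi (0:ℝ),
      HasDerivWithinAt (fun u : ℝ => c / u) (-(c / u ^ 2)) (Set.Ioi 0) u := by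
    intro u hu
    simp only [Set.mem_Ioi] at hu
    have := (hasDerivAt_inv (ne_of_gt hu)).const_mul c
    simp only [div_eq_mul_inv]
    rw [show -(c * (u ^ 2)⁻¹) = c * -(u ^ 2)⁻¹ by ring]
    exact this.hasDerivWithinAt
  have hinv_inj : Set.InjOn (fun u : ℝ => c / u) (Set.Ioi 0) := by
    intro u hu w hw h
    simp only [Set.mem_Ioi] at hu hw
    field_simp at h
    exact h.symm
  have hinv_img : (fun u : ℝ => c / u) '' Set.Ioi 0 = Set.Ioi 0 := by
    ext v
    simp only [Set.mem_image, Set.mem_Ioi]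
    constructor
    · rintro ⟨u, hu, rfl⟩; positivity
    · intro hv; exact ⟨c / v, by positivity, by field_simp⟩
  have hsym : ∫ u in Set.Ioi (0:ℝ), g u
      = ∫ u in Set.Ioi (0:ℝ), (c / u ^ 2) * g u := by
    conv_lhs => rw [← hinv_img]
    rw [MeasureTheory.integral_image_eq_integral_abs_deriv_smul measurableSet_Ioi
      hinv_deriv hinv_inj g]
    apply setIntegral_congr_fun measurableSet_Ioi
    intro u hu
    simp only [Set.mem_Ioi] at hu
    have h1 : |(-(c / u ^ 2))| = c / u ^ 2 := by
      rw [abs_neg, abs_of_pos (by positivity)]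
    have h2 : g (c / u) = g u := by
      rw [hg]
      simp only
      have hcu : c / (c / u) = u := by field_simp
      rw [hcu]
      congr 1
      ring
    simp [h1, h2, smul_eq_mul]
  have hI2 : IntegrableOn (fun u : ℝ => (c / u ^ 2) * g u) (Set.Ioi 0) := by
    have := (MeasureTheory.integrableOn_image_iff_integrableOn_abs_deriv_smul
      measurableSet_Ioi hinv_deriv hinv_inj g).mp (by rw [hinv_img]; exact g_integrable a c ha hc)
    apply this.congr_fun ?_ measurableSet_Ioi
    intro u hu
    simp only [Set.mem_Ioi] at hu
    have h1 : |(-(c / u ^ 2))| = c / u ^ 2 := by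
      rw [abs_neg, abs_of_pos (by positivity)]
    have h2 : g (c / u) = g u := by
      rw [hg]; simp only
      have hcu : c / (c / u) = u := by field_simp
      rw [hcu]; congr 1; ring
    simp [h1, h2, smul_eq_mul]
  -- main change of variables: v = u - c/u
  have hf_deriv : ∀ u ∈ Set.Ioi (0:ℝ),
      HasDerivWithinAt (fun u : ℝ => u - c / u) (1 + c / u ^ 2) (Set.Ioi 0) u := by
    intro u hu
    simp only [Set.mem_Ioi] at hu
    have h1 := (hasDerivAt_id u).sub ((hasDerivAt_inv (ne_of_gt hu)).const_mul c)
    have h2 : HasDerivAt (fun u : ℝ => u - c / u) (1 - c * -(u ^ 2)⁻¹) u := by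
      have hfe : (fun u : ℝ => u - c / u) = id - fun y => c * y⁻¹ := by
        ext x; simp [div_eq_mul_inv]
      rw [hfe]; exact h1
    have h3 : (1 : ℝ) - c * -(u ^ 2)⁻¹ = 1 + c / u ^ 2 := by field_simp; ring
    rw [← h3]
    exact h2.hasDerivWithinAt
  have hcov : ∫ v : ℝ, Real.exp (-(a * v ^ 2))
      = ∫ u in Set.Ioi (0:ℝ), (1 + c / u ^ 2) * g u := by
    rw [← MeasureTheory.setIntegral_univ, ← img_univ c hc,
      MeasureTheory.integral_image_eq_integral_abs_deriv_smul measurableSet_Ioi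
      hf_deriv ((mono_f c hc).injOn)]
    apply setIntegral_congr_fun measurableSet_Ioi
    intro u hu
    simp only [Set.mem_Ioi] at hu
    simp only [smul_eq_mul, hg]
    rw [abs_of_pos (by positivity : (0:ℝ) < 1 + c / u ^ 2)]
  have hgauss : ∫ v : ℝ, Real.exp (-(a * v ^ 2)) = Real.sqrt (π / a) := by
    simp_rw [neg_mul_eq_neg_mul]
    exact integral_gaussian a
  have hsum : ∀ u : ℝ, (1 + c / u ^ 2) * g u = g u + (c / u ^ 2) * g u := by
    intro u; ring
  simp_rw [hsum] at hcov
  rw [MeasureTheory.integral_add (g_integrable a c ha hc) hI2, ← hsym] at hcov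
  rw [hgauss] at hcov
  have : ∫ u in Set.Ioi (0:ℝ), g u = Real.sqrt (π / a) / 2 := by linarith
  rw [this]; ring

theorem laplace_transform_heat_kernel_one_half (l s : ℝ) (hl : 0 < l) (hs : 0 < s) :
    ∫ t in Set.Ioi (0:ℝ),
        Real.exp (-t * s ^ 2) * (4 * π * t) ^ (-(1:ℝ)/2) * Real.exp (-l ^ 2 / (4 * t))
      = Real.exp (-l * s) / (2 * s) := by
  have hsq_deriv : ∀ u ∈ Set.Ioi (0:ℝ),
      HasDerivWithinAt (fun u : ℝ => u ^ 2) (2 * u) (Set.Ioi 0) u := by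
    intro u hu
    simpa using ((hasDerivAt_pow 2 u).hasDerivWithinAt :)
  have hsq_inj : Set.InjOn (fun u : ℝ => u ^ 2) (Set.Ioi 0) := by
    intro u hu w hw h
    simp only [Set.mem_Ioi] at hu hw
    simp only at h
    nlinarith [sq_nonneg (u - w), sq_nonneg (u + w)]
  have hsq_img : (fun u : ℝ => u ^ 2) '' Set.Ioi 0 = Set.Ioi 0 := by
    ext v
    simp only [Set.mem_image, Set.mem_Ioi]
    constructor
    · rintro ⟨u, hu, rfl⟩; positivity
    · intro hv
      exact ⟨Real.sqrt v, Real.sqrt_pos.mpr hv, Real.sq_sqrt hv.le⟩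
  rw [← hsq_img, MeasureTheory.integral_image_eq_integral_abs_deriv_smul measurableSet_Ioi
    hsq_deriv hsq_inj]
  have hpt : ∀ u ∈ Set.Ioi (0:ℝ),
      |2 * u| • (Real.exp (-u ^ 2 * s ^ 2) * (4 * π * u ^ 2) ^ (-(1:ℝ)/2) *
        Real.exp (-l ^ 2 / (4 * u ^ 2)))
      = (Real.sqrt π)⁻¹ *
          Real.exp (-(s ^ 2 * u ^ 2 + s ^ 2 * (l / (2 * s)) ^ 2 / u ^ 2)) := by
    intro u hu
    simp only [Set.mem_Ioi] at hu
    have hsp : 0 < Real.sqrt π := Real.sqrt_pos.mpr pi_pos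
    have hb : (4 * π * u ^ 2) = (2 * Real.sqrt π * u) ^ 2 := by
      have := Real.sq_sqrt pi_pos.le
      nlinarith
    have hr : (4 * π * u ^ 2) ^ (-(1:ℝ)/2) = (2 * Real.sqrt π * u)⁻¹ := by
      rw [hb, show -(1:ℝ)/2 = -(1/2) by norm_num,
        Real.rpow_neg (by positivity), ← Real.sqrt_eq_rpow,
        Real.sqrt_sq (by positivity)]
    rw [hr, abs_of_pos (by positivity), smul_eq_mul]
    have hexp : Real.exp (-u ^ 2 * s ^ 2) * Real.exp (-l ^ 2 / (4 * u ^ 2))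
        = Real.exp (-(s ^ 2 * u ^ 2 + s ^ 2 * (l / (2 * s)) ^ 2 / u ^ 2)) := by
      rw [← Real.exp_add]
      congr 1
      field_simp
      ring
    calc 2 * u * (Real.exp (-u ^ 2 * s ^ 2) * (2 * Real.sqrt π * u)⁻¹ *
          Real.exp (-l ^ 2 / (4 * u ^ 2)))
        = (Real.sqrt π)⁻¹ *
          (Real.exp (-u ^ 2 * s ^ 2) * Real.exp (-l ^ 2 / (4 * u ^ 2))) := by
          field_simp
      _ = _ := by rw [hexp]
  rw [setIntegral_congr_fun measurableSet_Ioi hpt, integral_const_mul,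
    key (s ^ 2) (l / (2 * s)) (by positivity) (by positivity)]
  have h1 : Real.sqrt (π / s ^ 2) = Real.sqrt π / s := by
    rw [Real.sqrt_div pi_pos.le, Real.sqrt_sq hs.le]
  have h2 : -(2 * s ^ 2 * (l / (2 * s))) = -l * s := by
    field_simp
  rw [h1, h2]
  have hsp : 0 < Real.sqrt π := Real.sqrt_pos.mpr pi_pos
  field_simp
end

section
/- Let s₁, …, s_N ∈ ℂ be pairwise distinct with s_i² ≠ s_j² for all i ≠ j. Then as t → 0⁺, the function ∑_{i=1}^N (∏_{j≠i} 1/(s_j² − s_i²)) e^{-t s_i²} is O(t^{N−1}). -/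
open Asymptotics Finset Topology Polynomial

lemma coeff_lagrange_basis {F : Type*} [Field F] {ι : Type*} [DecidableEq ι]
    {s : Finset ι} {v : ι → F} (hvs : Set.InjOn v s) {i : ι} (hi : i ∈ s) :
    (Lagrange.basis s v i).coeff (#s - 1) = ∏ j ∈ s.erase i, (v i - v j)⁻¹ := by
  have hdeg := Lagrange.natDegree_basis hvs hi
  have : (Lagrange.basis s v i).coeff (#s - 1) = (Lagrange.basis s v i).leadingCoeff := by
    rw [Polynomial.leadingCoeff, hdeg]
  rw [this]
  unfold Lagrange.basis
  rw [Polynomial.leadingCoeff_prod]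
  refine Finset.prod_congr rfl fun j hj => ?_
  have hij : v i ≠ v j := by
    have hj' := Finset.mem_erase.mp hj
    exact fun h => hj'.1 (hvs hj'.2 hi h.symm)
  rw [Lagrange.basisDivisor, leadingCoeff_mul, leadingCoeff_C,
    (Polynomial.monic_X_sub_C _).leadingCoeff, mul_one]

lemma lagrange_sum_pow_eq_zero {N : ℕ} {x : Fin N → ℂ} (hinj : Function.Injective x)
    {k : ℕ} (hk : k < N - 1) :
    ∑ i, (∏ j ∈ Finset.univ.erase i, (x i - x j)⁻¹) * x i ^ k = 0 := by
  have hcard : #(univ : Finset (Fin N)) = N := by simp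
  have hdeg : ((X : ℂ[X]) ^ k).degree < #(univ : Finset (Fin N)) := by
    rw [Polynomial.degree_X_pow, hcard]
    exact_mod_cast lt_of_lt_of_le hk (Nat.sub_le N 1)
  have h := Lagrange.eq_interpolate (s := univ) (v := x) hinj.injOn hdeg
  have h2 := congrArg (fun p : ℂ[X] => p.coeff (#(univ : Finset (Fin N)) - 1)) h
  simp only [Lagrange.interpolate_apply, Polynomial.finset_sum_coeff,
    Polynomial.coeff_C_mul, Polynomial.eval_pow, Polynomial.eval_X] at h2
  rw [Polynomial.coeff_X_pow, if_neg (by rw [hcard]; exact (Nat.ne_of_lt hk).symm)] at h2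
  rw [show (0:ℂ) = ∑ i, x i ^ k * (Lagrange.basis univ x i).coeff
      (#(univ : Finset (Fin N)) - 1) from h2]
  refine Finset.sum_congr rfl fun i _ => ?_
  rw [coeff_lagrange_basis hinj.injOn (mem_univ i), mul_comm]

lemma exp_taylor_isBigO (c : ℂ) (n : ℕ) :
    (fun t : ℝ => Complex.exp (-(t:ℂ) * c) -
        ∑ k ∈ Finset.range n, (-(t:ℂ) * c) ^ k / k.factorial)
      =O[𝓝[>] (0:ℝ)] fun t => t ^ n := by
  rcases Nat.eq_zero_or_pos n with rfl | hn
  · simp only [Finset.range_zero, Finset.sum_empty, sub_zero, pow_zero]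
    have hcont : Filter.Tendsto (fun t : ℝ => Complex.exp (-(t:ℂ) * c)) (𝓝[>] (0:ℝ))
        (𝓝 (Complex.exp (-(0:ℝ) * c))) := by
      apply Filter.Tendsto.mono_left _ nhdsWithin_le_nhds
      exact (Continuous.continuousAt (by continuity)).tendsto
    exact hcont.isBigO_one ℝ
  · rw [Asymptotics.isBigO_iff]
    refine ⟨‖c‖ ^ n * ((n.succ : ℝ) * ((n.factorial : ℝ) * n)⁻¹), ?_⟩
    have hmem : Set.Ioc (0:ℝ) ((‖c‖ + 1)⁻¹) ∈ 𝓝[>] (0:ℝ) :=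
      Ioc_mem_nhdsGT_of_mem ⟨le_refl _, by positivity⟩
    filter_upwards [hmem] with t ht
    have ht0 : 0 < t := ht.1
    have habs : ‖-(t:ℂ) * c‖ = t * ‖c‖ := by
      rw [norm_mul, norm_neg, Complex.norm_real, Real.norm_eq_abs, abs_of_pos ht0]
    have hle1 : ‖-(t:ℂ) * c‖ ≤ 1 := by
      rw [habs]
      calc t * ‖c‖ ≤ (‖c‖ + 1)⁻¹ * (‖c‖ + 1) := by
            apply mul_le_mul ht.2 (by linarith [norm_nonneg c]) (norm_nonneg c) (by positivity)
        _ = 1 := inv_mul_cancel₀ (by positivity)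
    have hb := Complex.exp_bound hle1 hn
    calc ‖(Complex.exp (-(t:ℂ) * c) -
          ∑ k ∈ Finset.range n, (-(t:ℂ) * c) ^ k / k.factorial)‖
        ≤ ‖-(t:ℂ) * c‖ ^ n * ((n.succ : ℝ) * ((n.factorial : ℝ) * n)⁻¹) := hb
      _ = ‖c‖ ^ n * ((n.succ : ℝ) * ((n.factorial : ℝ) * n)⁻¹) * ‖t ^ n‖ := by
          rw [habs, mul_pow, Real.norm_eq_abs, abs_of_pos (pow_pos ht0 n)]
          ring

theorem partial_fraction_kernel_isBigO_pow
    (N : ℕ) (hN : 1 ≤ N) (s : Fin N → ℂ)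
    (hs : ∀ i j, i ≠ j → s i ≠ s j)
    (hs2 : ∀ i j, i ≠ j → s i ^ 2 ≠ s j ^ 2) :
    (fun t : ℝ => ∑ i, (∏ j ∈ Finset.univ.erase i, (s j ^ 2 - s i ^ 2)⁻¹) *
        Complex.exp (-(t:ℂ) * s i ^ 2))
      =O[𝓝[>] (0:ℝ)] fun t : ℝ => t ^ (N - 1) := by
  set x : Fin N → ℂ := fun i => s i ^ 2 with hx
  have hinj : Function.Injective x := by
    intro i j h
    by_contra hij
    exact hs2 i j hij h
  set n := N - 1 with hn
  set c : Fin N → ℂ := fun i => ∏ j ∈ univ.erase i, (x j - x i)⁻¹ with hc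
  have hkey : ∀ k < n, ∑ i, c i * x i ^ k = 0 := by
    intro k hk
    have h0 := lagrange_sum_pow_eq_zero hinj (hn ▸ hk)
    have hcn : ∀ i : Fin N, c i = (-1:ℂ)^n * ∏ j ∈ univ.erase i, (x i - x j)⁻¹ := by
      intro i
      calc c i = ∏ j ∈ univ.erase i, ((-1:ℂ) * (x i - x j)⁻¹) := by
            refine Finset.prod_congr rfl fun j hj => ?_
            rw [show x j - x i = -(x i - x j) by ring, inv_neg, neg_one_mul]
        _ = (-1:ℂ)^n * ∏ j ∈ univ.erase i, (x i - x j)⁻¹ := by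
            rw [Finset.prod_mul_distrib, Finset.prod_const,
              Finset.card_erase_of_mem (mem_univ i), card_univ, Fintype.card_fin]
    simp_rw [hcn, mul_assoc]
    rw [← Finset.mul_sum, h0, mul_zero]
  have heq : (fun t : ℝ => ∑ i, (∏ j ∈ Finset.univ.erase i, (s j ^ 2 - s i ^ 2)⁻¹) *
        Complex.exp (-(t:ℂ) * s i ^ 2))
      = fun t : ℝ => ∑ i, c i * (Complex.exp (-(t:ℂ) * x i) -
          ∑ k ∈ Finset.range n, (-(t:ℂ) * x i) ^ k / k.factorial) := by
    funext t
    have hzero : ∑ i, c i * ∑ k ∈ Finset.range n, (-(t:ℂ) * x i) ^ k / k.factorial = 0 := by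
      have hterm : ∀ i : Fin N, c i * ∑ k ∈ Finset.range n, (-(t:ℂ) * x i) ^ k / k.factorial
          = ∑ k ∈ Finset.range n, ((-(t:ℂ)) ^ k / k.factorial) * (c i * x i ^ k) := by
        intro i
        rw [Finset.mul_sum]
        refine Finset.sum_congr rfl fun k _ => ?_
        rw [mul_pow]
        ring
      simp_rw [hterm]
      rw [Finset.sum_comm]
      refine Finset.sum_eq_zero fun k hk => ?_
      rw [← Finset.mul_sum, hkey k (mem_range.mp hk), mul_zero]
    simp_rw [mul_sub]
    rw [Finset.sum_sub_distrib, hzero, sub_zero]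
  rw [heq]
  exact Asymptotics.IsBigO.fun_sum fun i _ => (exp_taylor_isBigO (x i) n).const_mul_left (c i)
end
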